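/- There is no arithmetic progression of four distinct rational squares; i.e., there do not exist rationals a1 < a2 < a3 < a4 in arithmetic progression all of which are squares of rationals and pairwise distinct. -/

import Mathlib

lemma sq_emod4 (x : ℤ) : (x % 2 = 1 ∧ x^2 % 4 = 1) ∨ (x % 2 = 0 ∧ x^2 % 4 = 0) := by
  rcases Int.even_or_odd x with ⟨t, ht⟩ | ⟨t, ht⟩
  · right; refine ⟨by omega, ?_⟩
    have : x^2 = 4*t^2 := by rw [ht]; ring
    omega
  · left; refine ⟨by omega, ?_⟩
    have : x^2 = 4*(t^2+t) + 1 := by rw [ht]; ring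
    omega

lemma sq_emod8 (x : ℤ) :
    (x % 2 = 1 ∧ x^2 % 8 = 1) ∨ (x % 2 = 0 ∧ x^2 % 8 = 0) ∨ (x % 2 = 0 ∧ x^2 % 8 = 4) := by
  rcases Int.even_or_odd x with ⟨t, ht⟩ | ⟨t, ht⟩
  · rcases Int.even_or_odd t with ⟨c, hc⟩ | ⟨c, hc⟩
    · right; left; refine ⟨by omega, ?_⟩
      have : x^2 = 8*(2*c^2) := by rw [ht, hc]; ring
      omega
    · right; right; refine ⟨by omega, ?_⟩
      have : x^2 = 8*(2*c^2+2*c) + 4 := by rw [ht, hc]; ring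
      omega
  · left; refine ⟨by omega, ?_⟩
    obtain ⟨c, hc⟩ : ∃ c, t*(t+1) = 2*c := (Int.even_mul_succ_self t).elim (fun c hc => ⟨c, by omega⟩)
    have : x^2 = 8*c + 1 := by rw [ht]; nlinarith [hc]
    omega

lemma no_h1 (x y z w : ℤ) (hc : ¬(x % 2 = 0 ∧ y % 2 = 0))
    (h1 : x^2 + 2*y^2 = z^2) (h2 : 2*x^2 + y^2 = w^2) : False := by
  have e1 := sq_emod4 x
  have e2 := sq_emod4 y
  have e3 := sq_emod4 z
  have e4 := sq_emod4 w
  obtain ⟨X, hX⟩ : ∃ X, x^2 = X := ⟨_, rfl⟩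
  obtain ⟨Y, hY⟩ : ∃ Y, y^2 = Y := ⟨_, rfl⟩
  obtain ⟨Z, hZ⟩ : ∃ Z, z^2 = Z := ⟨_, rfl⟩
  obtain ⟨W, hW⟩ : ∃ W, w^2 = W := ⟨_, rfl⟩
  rw [hX] at e1 h1 h2
  rw [hY] at e2 h1 h2
  rw [hZ] at e3 h1
  rw [hW] at e4 h2
  rcases e1 with ⟨a1,b1⟩|⟨a1,b1⟩ <;> rcases e2 with ⟨a2,b2⟩|⟨a2,b2⟩ <;>
    rcases e3 with ⟨a3,b3⟩|⟨a3,b3⟩ <;> rcases e4 with ⟨a4,b4⟩|⟨a4,b4⟩ <;> omega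

lemma sq_ne_of_opp_parity (m n : ℤ) (h : m % 2 = 0 ∧ n % 2 = 1 ∨ m % 2 = 1 ∧ n % 2 = 0) :
    m^2 ≠ n^2 := by
  intro heq
  have e1 := sq_emod4 m
  have e2 := sq_emod4 n
  obtain ⟨M, hM⟩ : ∃ M, m^2 = M := ⟨_, rfl⟩
  obtain ⟨N, hN⟩ : ∃ N, n^2 = N := ⟨_, rfl⟩
  rw [hM] at e1 heq
  rw [hN] at e2 heq
  rcases e1 with ⟨a1,b1⟩|⟨a1,b1⟩ <;> rcases e2 with ⟨a2,b2⟩|⟨a2,b2⟩ <;> omega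

lemma one_le_sq {x : ℤ} (h : x ≠ 0) : 1 ≤ x^2 := by
  nlinarith [Int.one_le_abs h, sq_abs x, abs_nonneg x]

set_option maxHeartbeats 2000000 in
theorem no4AP : ∀ (μ : ℕ) (p q r s : ℤ), (q^2+r^2).toNat ≤ μ →
    2*q^2 = p^2 + r^2 → 2*r^2 = q^2 + s^2 → q^2 < r^2 → False := by
  intro μ
  induction μ using Nat.strong_induction_on with
  | _ μ IH =>
  intro p q r s hμ h1 h2 hlt
  obtain ⟨P, hP0, hP⟩ : ∃ P : ℤ, 0 ≤ P ∧ P^2 = p^2 := ⟨|p|, abs_nonneg p, sq_abs p⟩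
  obtain ⟨Q, hQ0, hQ⟩ : ∃ Q : ℤ, 0 ≤ Q ∧ Q^2 = q^2 := ⟨|q|, abs_nonneg q, sq_abs q⟩
  obtain ⟨R, hR0, hR⟩ : ∃ R : ℤ, 0 ≤ R ∧ R^2 = r^2 := ⟨|r|, abs_nonneg r, sq_abs r⟩
  obtain ⟨S, hS0, hS⟩ : ∃ S : ℤ, 0 ≤ S ∧ S^2 = s^2 := ⟨|s|, abs_nonneg s, sq_abs s⟩
  have h1' : 2*Q^2 = P^2 + R^2 := by rw [hP, hQ, hR]; exact h1
  have h2' : 2*R^2 = Q^2 + S^2 := by rw [hQ, hR, hS]; exact h2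
  have hlt' : Q^2 < R^2 := by rw [hQ, hR]; exact hlt
  have hμ' : (Q^2+R^2).toNat ≤ μ := by rw [hQ, hR]; exact hμ
  clear h1 h2 hlt hμ hP hQ hR hS
  have hRne : R ≠ 0 := by rintro rfl; nlinarith [sq_nonneg Q]
  set g : ℕ := Nat.gcd (Int.gcd P Q) (Int.gcd R S) with hg
  have hgP : (g:ℤ) ∣ P := dvd_trans (Int.natCast_dvd_natCast.mpr (Nat.gcd_dvd_left _ _)) (Int.gcd_dvd_left _ _)
  have hgQ : (g:ℤ) ∣ Q := dvd_trans (Int.natCast_dvd_natCast.mpr (Nat.gcd_dvd_left _ _)) (Int.gcd_dvd_right _ _)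
  have hgR : (g:ℤ) ∣ R := dvd_trans (Int.natCast_dvd_natCast.mpr (Nat.gcd_dvd_right _ _)) (Int.gcd_dvd_left _ _)
  have hgS : (g:ℤ) ∣ S := dvd_trans (Int.natCast_dvd_natCast.mpr (Nat.gcd_dvd_right _ _)) (Int.gcd_dvd_right _ _)
  rcases Nat.lt_or_ge g 2 with hglt | hgge
  case inr =>
    obtain ⟨P₁, hP₁⟩ := hgP
    obtain ⟨Q₁, hQ₁⟩ := hgQ
    obtain ⟨R₁, hR₁⟩ := hgR
    obtain ⟨S₁, hS₁⟩ := hgS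
    have hgz : (2:ℤ) ≤ (g:ℤ) := by exact_mod_cast hgge
    have hgne : ((g:ℤ))^2 ≠ 0 := by positivity
    rw [hP₁, hR₁] at h1'
    rw [hQ₁] at h1' h2' hlt' hμ'
    rw [hR₁] at h2' hlt' hμ'
    rw [hS₁] at h2'
    have e1 : 2*Q₁^2 = P₁^2 + R₁^2 := by
      apply mul_left_cancel₀ hgne; linear_combination h1'
    have e2 : 2*R₁^2 = Q₁^2 + S₁^2 := by
      apply mul_left_cancel₀ hgne; linear_combination h2'
    have hgpos : (0:ℤ) < (g:ℤ) := by linarith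
    have hgg : (0:ℤ) < (g:ℤ)^2 := by positivity
    have h4 : (4:ℤ) ≤ (g:ℤ)^2 := by nlinarith
    have e3 : Q₁^2 < R₁^2 := by
      have h' : (g:ℤ)^2 * Q₁^2 < (g:ℤ)^2 * R₁^2 := by nlinarith [hlt']
      exact lt_of_mul_lt_mul_left h' (le_of_lt hgg)
    have hR₁z : R₁ ≠ 0 := by
      rintro rfl; exact hRne (by rw [hR₁, mul_zero])
    have hR₁ne : 0 < R₁^2 := by positivity
    have hmeas : Q₁^2 + R₁^2 < ((g:ℤ)*Q₁)^2 + ((g:ℤ)*R₁)^2 := by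
      nlinarith [mul_nonneg (by linarith : (0:ℤ) ≤ (g:ℤ)^2 - 4) (by positivity : (0:ℤ) ≤ Q₁^2 + R₁^2), sq_nonneg Q₁]
    have hgRz : (g:ℤ)*R₁ ≠ 0 := mul_ne_zero (by linarith) hR₁z
    have hpos : (0:ℤ) < ((g:ℤ)*Q₁)^2 + ((g:ℤ)*R₁)^2 := by positivity
    refine IH ((Q₁^2+R₁^2).toNat) ?_ P₁ Q₁ R₁ S₁ le_rfl e1 e2 e3
    calc (Q₁^2+R₁^2).toNat < (((g:ℤ)*Q₁)^2 + ((g:ℤ)*R₁)^2).toNat := by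
          rw [Int.toNat_lt_toNat hpos]; exact hmeas
      _ ≤ μ := hμ'
  case inl =>
    have hg01 : g = 0 ∨ g = 1 := by omega
    rcases hg01 with hg0 | hg1
    · have : Int.gcd R S = 0 := Nat.eq_zero_of_gcd_eq_zero_right (hg ▸ hg0)
      exact hRne (Int.gcd_eq_zero_iff.mp this).1
    have hodd : P % 2 = 1 ∧ Q % 2 = 1 ∧ R % 2 = 1 ∧ S % 2 = 1 := by
      have hne2 : ¬(P % 2 = 0 ∧ Q % 2 = 0 ∧ R % 2 = 0 ∧ S % 2 = 0) := by
        rintro ⟨d1, d2, d3, d4⟩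
        have e1 : (2:ℤ) ∣ Int.gcd P Q := Int.dvd_coe_gcd (by omega) (by omega)
        have e2 : (2:ℤ) ∣ Int.gcd R S := Int.dvd_coe_gcd (by omega) (by omega)
        have e1' : 2 ∣ Int.gcd P Q := by exact_mod_cast e1
        have e2' : 2 ∣ Int.gcd R S := by exact_mod_cast e2
        have : 2 ∣ g := hg ▸ Nat.dvd_gcd e1' e2'
        omega
      have f1 := sq_emod8 P
      have f2 := sq_emod8 Q
      have f3 := sq_emod8 R
      have f4 := sq_emod8 S
      obtain ⟨A, hA⟩ : ∃ A, P^2 = A := ⟨_, rfl⟩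
      obtain ⟨B, hB⟩ : ∃ B, Q^2 = B := ⟨_, rfl⟩
      obtain ⟨C, hC⟩ : ∃ C, R^2 = C := ⟨_, rfl⟩
      obtain ⟨D, hD⟩ : ∃ D, S^2 = D := ⟨_, rfl⟩
      rw [hA] at f1 h1'
      rw [hB] at f2 h1' h2'
      rw [hC] at f3 h1' h2'
      rw [hD] at f4 h2'
      rcases f1 with ⟨a1,b1⟩|⟨a1,b1⟩|⟨a1,b1⟩ <;> rcases f2 with ⟨a2,b2⟩|⟨a2,b2⟩|⟨a2,b2⟩ <;>
        rcases f3 with ⟨a3,b3⟩|⟨a3,b3⟩|⟨a3,b3⟩ <;> rcases f4 with ⟨a4,b4⟩|⟨a4,b4⟩|⟨a4,b4⟩ <;>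
        omega
    obtain ⟨hoP, hoQ, hoR, hoS⟩ := hodd
    have hQpos : 0 < Q := by omega
    have hRpos : 0 < R := by omega
    -- pairwise coprimality needed
    have hPR : Int.gcd P R = 1 := by
      by_contra hne1
      obtain ⟨ℓ, hℓp, hℓd⟩ := Nat.exists_prime_and_dvd hne1
      have hℓP : (ℓ:ℤ) ∣ P := dvd_trans (Int.natCast_dvd_natCast.mpr hℓd) (Int.gcd_dvd_left _ _)
      have hℓR : (ℓ:ℤ) ∣ R := dvd_trans (Int.natCast_dvd_natCast.mpr hℓd) (Int.gcd_dvd_right _ _)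
      have hℓZ : Prime (ℓ:ℤ) := Int.prime_iff_natAbs_prime.mpr (by simpa using hℓp)
      have hℓ2 : ℓ ≠ 2 := by
        rintro rfl
        obtain ⟨c, hc⟩ := hℓP
        omega
      have hℓQ : (ℓ:ℤ) ∣ Q := by
        have hd2 : (ℓ:ℤ) ∣ 2*Q^2 := by
          rw [h1']; exact dvd_add (dvd_pow hℓP (by norm_num)) (dvd_pow hℓR (by norm_num))
        rcases hℓZ.dvd_mul.mp hd2 with h | h
        · exfalso
          have h2' : ℓ ∣ 2 := by exact_mod_cast h
          exact hℓ2 ((Nat.prime_dvd_prime_iff_eq hℓp Nat.prime_two).mp h2')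
        · exact hℓZ.dvd_of_dvd_pow h
      have hℓS : (ℓ:ℤ) ∣ S := by
        have hd2 : (ℓ:ℤ) ∣ S^2 := by
          have hss : S^2 = 2*R^2 - Q^2 := by linarith
          rw [hss]
          exact dvd_sub (Dvd.dvd.mul_left (dvd_pow hℓR (by norm_num)) 2) (dvd_pow hℓQ (by norm_num))
        exact hℓZ.dvd_of_dvd_pow hd2
      have c1 : ℓ ∣ Int.gcd P Q := by
        have := Int.dvd_gcd hℓP hℓQ
        exact_mod_cast this
      have c2 : ℓ ∣ Int.gcd R S := by
        have := Int.dvd_gcd hℓR hℓS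
        exact_mod_cast this
      have : ℓ ∣ g := hg ▸ Nat.dvd_gcd c1 c2
      rw [hg1] at this
      exact absurd (Nat.eq_one_of_dvd_one this) hℓp.one_lt.ne'
    have hQS : Int.gcd Q S = 1 := by
      by_contra hne1
      obtain ⟨ℓ, hℓp, hℓd⟩ := Nat.exists_prime_and_dvd hne1
      have hℓQ : (ℓ:ℤ) ∣ Q := dvd_trans (Int.natCast_dvd_natCast.mpr hℓd) (Int.gcd_dvd_left _ _)
      have hℓS : (ℓ:ℤ) ∣ S := dvd_trans (Int.natCast_dvd_natCast.mpr hℓd) (Int.gcd_dvd_right _ _)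
      have hℓZ : Prime (ℓ:ℤ) := Int.prime_iff_natAbs_prime.mpr (by simpa using hℓp)
      have hℓ2 : ℓ ≠ 2 := by
        rintro rfl
        obtain ⟨c, hc⟩ := hℓQ
        omega
      have hℓR : (ℓ:ℤ) ∣ R := by
        have hd2 : (ℓ:ℤ) ∣ 2*R^2 := by
          rw [h2']; exact dvd_add (dvd_pow hℓQ (by norm_num)) (dvd_pow hℓS (by norm_num))
        rcases hℓZ.dvd_mul.mp hd2 with h | h
        · exfalso
          have h2'' : ℓ ∣ 2 := by exact_mod_cast h
          exact hℓ2 ((Nat.prime_dvd_prime_iff_eq hℓp Nat.prime_two).mp h2'')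
        · exact hℓZ.dvd_of_dvd_pow h
      have hℓP : (ℓ:ℤ) ∣ P := by
        have hd2 : (ℓ:ℤ) ∣ P^2 := by
          have hss : P^2 = 2*Q^2 - R^2 := by linarith
          rw [hss]
          exact dvd_sub (Dvd.dvd.mul_left (dvd_pow hℓQ (by norm_num)) 2) (dvd_pow hℓR (by norm_num))
        exact hℓZ.dvd_of_dvd_pow hd2
      have c1 : ℓ ∣ Int.gcd P Q := by
        have := Int.dvd_gcd hℓP hℓQ
        exact_mod_cast this
      have c2 : ℓ ∣ Int.gcd R S := by
        have := Int.dvd_gcd hℓR hℓS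
        exact_mod_cast this
      have : ℓ ∣ g := hg ▸ Nat.dvd_gcd c1 c2
      rw [hg1] at this
      exact absurd (Nat.eq_one_of_dvd_one this) hℓp.one_lt.ne'
    -- first Pythagorean triple
    obtain ⟨x0, hx0⟩ : ∃ x0, R = P + 2*x0 := ⟨(R-P)/2, by omega⟩
    have ht1 : PythagoreanTriple x0 (P+x0) Q := by
      show x0*x0 + (P+x0)*(P+x0) = Q*Q
      apply mul_left_cancel₀ (two_ne_zero (α := ℤ))
      linear_combination -h1' - (R+P+2*x0)*hx0
    have hcop1 : Int.gcd x0 (P+x0) = 1 := by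
      apply Int.isCoprime_iff_gcd_eq_one.mp
      obtain ⟨e, f, hef⟩ := Int.isCoprime_iff_gcd_eq_one.mpr hPR
      exact ⟨f - e, e + f, by linear_combination hef - f*hx0⟩
    obtain ⟨m, n, hmn1, hmn2, hmncop, hmnpar⟩ :=
      PythagoreanTriple.coprime_classification.mp ⟨ht1, hcop1⟩
    have hQmn : Q = m^2 + n^2 := by
      rcases hmn2 with h | h
      · exact h
      · exfalso; nlinarith [hQpos, sq_nonneg m, sq_nonneg n]
    have hRmn : R = m^2 + 2*m*n - n^2 := by
      rcases hmn1 with ⟨e1, e2⟩ | ⟨e1, e2⟩ <;> linarith [hx0, e1, e2]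
    have hkmn : R^2 - Q^2 = 4*(m*n)*(m^2 - n^2) := by rw [hQmn, hRmn]; ring
    -- second Pythagorean triple
    obtain ⟨x1, hx1⟩ : ∃ x1, S = Q + 2*x1 := ⟨(S-Q)/2, by omega⟩
    have ht2 : PythagoreanTriple x1 (Q+x1) R := by
      show x1*x1 + (Q+x1)*(Q+x1) = R*R
      apply mul_left_cancel₀ (two_ne_zero (α := ℤ))
      linear_combination -h2' - (S+Q+2*x1)*hx1
    have hcop2 : Int.gcd x1 (Q+x1) = 1 := by
      apply Int.isCoprime_iff_gcd_eq_one.mp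
      obtain ⟨e, f, hef⟩ := Int.isCoprime_iff_gcd_eq_one.mpr hQS
      exact ⟨f - e, e + f, by linear_combination hef - f*hx1⟩
    obtain ⟨u, v, huv1, huv2, huvcop, huvpar⟩ :=
      PythagoreanTriple.coprime_classification.mp ⟨ht2, hcop2⟩
    have hRuv : R = u^2 + v^2 := by
      rcases huv2 with h | h
      · exact h
      · exfalso; nlinarith [hRpos, sq_nonneg u, sq_nonneg v]
    have hSuv : S = u^2 + 2*u*v - v^2 := by
      rcases huv1 with ⟨e1, e2⟩ | ⟨e1, e2⟩ <;> linarith [hx1, e1, e2]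
    have hQuv : Q = u^2 - 2*u*v - v^2 ∨ Q = -(u^2 - 2*u*v - v^2) := by
      rcases huv1 with ⟨e1, e2⟩ | ⟨e1, e2⟩
      · right; linarith [e1, e2]
      · left; linarith [e1, e2]
    have hAP : R^2 - Q^2 = S^2 - R^2 := by linarith [h2']
    have hkuv' : R^2 - Q^2 = 4*(u*v)*(u^2 - v^2) := by
      rw [hAP, hRuv, hSuv]; ring
    -- unify the sign
    obtain ⟨U, V, hRU, hQU, hUcop, hUpar, hkU⟩ :
        ∃ U V : ℤ, R = U^2 + V^2 ∧ Q = U^2 - 2*U*V - V^2 ∧ Int.gcd U V = 1 ∧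
          (U % 2 = 0 ∧ V % 2 = 1 ∨ U % 2 = 1 ∧ V % 2 = 0) ∧
          R^2 - Q^2 = 4*(U*V)*(U^2 - V^2) := by
      rcases hQuv with h | h
      · exact ⟨u, v, hRuv, h, huvcop, huvpar, hkuv'⟩
      · refine ⟨v, -u, by rw [hRuv]; ring, by linear_combination h, ?_, ?_, by linear_combination hkuv'⟩
        · have heq : Int.gcd v (-u) = Int.gcd u v := by
            simp [Int.gcd, Int.natAbs_neg, Nat.gcd_comm]
          rw [heq]; exact huvcop
        · rcases huvpar with ⟨e1, e2⟩ | ⟨e1, e2⟩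
          · right; constructor <;> omega
          · left; constructor <;> omega
    -- nonzeroness
    have hk0 : 0 < R^2 - Q^2 := by linarith
    have hmz : m ≠ 0 := by
      rintro rfl
      have : R^2 - Q^2 = 0 := by rw [hkmn]; ring
      linarith
    have hnz : n ≠ 0 := by
      rintro rfl
      have : R^2 - Q^2 = 0 := by rw [hkmn]; ring
      linarith
    have hUz : U ≠ 0 := by
      rintro rfl
      have : R^2 - Q^2 = 0 := by rw [hkU]; ring
      linarith
    have hVz : V ≠ 0 := by
      rintro rfl
      have : R^2 - Q^2 = 0 := by rw [hkU]; ring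
      linarith
    -- the two key equations
    have hA : m^2 + n^2 = U^2 - 2*U*V - V^2 := by rw [← hQmn]; exact hQU
    have hB : U^2 + V^2 = m^2 + 2*m*n - n^2 := by rw [← hRU]; exact hRmn
    have hI : U*(U-V) = m*(m+n) := by
      apply mul_left_cancel₀ (two_ne_zero (α := ℤ))
      linear_combination hB - hA
    have hII : V*(U+V) = n*(m-n) := by
      apply mul_left_cancel₀ (two_ne_zero (α := ℤ))
      linear_combination hB + hA
    -- gcd split 1
    set a : ℤ := ((Int.gcd U m : ℕ) : ℤ) with ha
    have hane : a ≠ 0 := by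
      simp only [ha, ne_eq, Int.natCast_eq_zero, Int.gcd_eq_zero_iff]
      rintro ⟨h', _⟩; exact hUz h'
    obtain ⟨u₀, hu₀⟩ : a ∣ U := Int.gcd_dvd_left _ _
    obtain ⟨m₀, hm₀⟩ : a ∣ m := Int.gcd_dvd_right _ _
    have hu₀z : u₀ ≠ 0 := by rintro rfl; exact hUz (by rw [hu₀, mul_zero])
    have hm₀z : m₀ ≠ 0 := by rintro rfl; exact hmz (by rw [hm₀, mul_zero])
    have hcopum : IsCoprime u₀ m₀ := by
      apply Int.isCoprime_iff_gcd_eq_one.mpr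
      have hpos : 0 < Int.gcd U m := by
        rcases Nat.eq_zero_or_pos (Int.gcd U m) with h | h
        · exact absurd (Int.natCast_eq_zero.mpr h) (by rw [← ha] at *; exact hane)
        · exact h
      have hd1 : U / a = u₀ := by rw [hu₀]; exact Int.mul_ediv_cancel_left _ hane
      have hd2 : m / a = m₀ := by rw [hm₀]; exact Int.mul_ediv_cancel_left _ hane
      rw [← hd1, ← hd2]
      exact Int.gcd_div_gcd_div_gcd hpos
    have hI₀ : u₀*(U-V) = m₀*(m+n) := by
      apply mul_left_cancel₀ hane
      linear_combination hI - (U-V)*hu₀ + (m+n)*hm₀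
    obtain ⟨w, hw⟩ : u₀ ∣ (m+n) := by
      refine hcopum.dvd_of_dvd_mul_left ⟨U-V, ?_⟩
      linear_combination -hI₀
    have hwv : U - V = m₀*w := by
      apply mul_left_cancel₀ hu₀z
      linear_combination hI₀ + m₀*hw
    -- gcd split 2
    set b : ℤ := ((Int.gcd V n : ℕ) : ℤ) with hb
    have hbne : b ≠ 0 := by
      simp only [hb, ne_eq, Int.natCast_eq_zero, Int.gcd_eq_zero_iff]
      rintro ⟨h', _⟩; exact hVz h'
    obtain ⟨v₀, hv₀⟩ : b ∣ V := Int.gcd_dvd_left _ _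
    obtain ⟨n₀, hn₀⟩ : b ∣ n := Int.gcd_dvd_right _ _
    have hv₀z : v₀ ≠ 0 := by rintro rfl; exact hVz (by rw [hv₀, mul_zero])
    have hn₀z : n₀ ≠ 0 := by rintro rfl; exact hnz (by rw [hn₀, mul_zero])
    have hcopvn : IsCoprime v₀ n₀ := by
      apply Int.isCoprime_iff_gcd_eq_one.mpr
      have hpos : 0 < Int.gcd V n := by
        rcases Nat.eq_zero_or_pos (Int.gcd V n) with h | h
        · exact absurd (Int.natCast_eq_zero.mpr h) (by rw [← hb] at *; exact hbne)
        · exact h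
      have hd1 : V / b = v₀ := by rw [hv₀]; exact Int.mul_ediv_cancel_left _ hbne
      have hd2 : n / b = n₀ := by rw [hn₀]; exact Int.mul_ediv_cancel_left _ hbne
      rw [← hd1, ← hd2]
      exact Int.gcd_div_gcd_div_gcd hpos
    have hII₀ : v₀*(U+V) = n₀*(m-n) := by
      apply mul_left_cancel₀ hbne
      linear_combination hII - (U+V)*hv₀ + (m-n)*hn₀
    obtain ⟨z, hz⟩ : v₀ ∣ (m-n) := by
      refine hcopvn.dvd_of_dvd_mul_left ⟨U+V, ?_⟩
      linear_combination -hII₀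
    have hzv : U + V = n₀*z := by
      apply mul_left_cancel₀ hv₀z
      linear_combination hII₀ + n₀*hz
    -- linear system
    have L1 : a*m₀ + b*n₀ = u₀*w := by linear_combination hw - hm₀ - hn₀
    have L2 : a*m₀ - b*n₀ = v₀*z := by linear_combination hz - hm₀ + hn₀
    have L3 : a*u₀ - b*v₀ = m₀*w := by linear_combination hwv - hu₀ + hv₀
    have L4 : a*u₀ + b*v₀ = n₀*z := by linear_combination hzv - hu₀ - hv₀
    have E1 : (u₀^2 - m₀^2)*w = (m₀*n₀ - u₀*v₀)*z := by
      linear_combination (-u₀)*L1 + (-u₀)*L2 + m₀*L3 + m₀*L4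
    have E2 : (u₀*v₀ + m₀*n₀)*w = (n₀^2 + v₀^2)*z := by
      linear_combination (-v₀)*L1 + v₀*L2 + (-n₀)*L3 + n₀*L4
    have hwz : w ≠ 0 := by
      rintro rfl
      rw [mul_zero] at hw
      rcases hmnpar with ⟨e1, e2⟩ | ⟨e1, e2⟩ <;> omega
    have hstar : u₀^2*(n₀^2 + 2*v₀^2) = m₀^2*(2*n₀^2 + v₀^2) := by
      have h0 : (u₀^2*(n₀^2 + 2*v₀^2) - m₀^2*(2*n₀^2 + v₀^2))*w = 0 := by
        linear_combination (n₀^2+v₀^2)*E1 - (m₀*n₀ - u₀*v₀)*E2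
      have h00 := (mul_eq_zero.mp h0).resolve_right hwz
      linarith only [h00]
    -- extract h
    have hcoppow : IsCoprime (m₀^2) (u₀^2) := (hcopum.symm).pow
    obtain ⟨h, hA'⟩ : m₀^2 ∣ (n₀^2 + 2*v₀^2) := by
      refine hcoppow.dvd_of_dvd_mul_left ⟨2*n₀^2 + v₀^2, ?_⟩
      linear_combination hstar
    have hB' : 2*n₀^2 + v₀^2 = u₀^2*h := by
      apply mul_left_cancel₀ (pow_ne_zero 2 hm₀z)
      linear_combination -hstar + u₀^2*hA'
    have hd3n : h ∣ 3*n₀^2 := ⟨2*u₀^2 - m₀^2, by linear_combination 2*hB' - hA'⟩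
    have hd3v : h ∣ 3*v₀^2 := ⟨2*m₀^2 - u₀^2, by linear_combination 2*hA' - hB'⟩
    have h3 : h ∣ 3 := by
      obtain ⟨α, β, hαβ⟩ := (hcopvn.symm).pow (m := 2) (n := 2)
      have h33 : (3:ℤ) = α*(3*n₀^2) + β*(3*v₀^2) := by linear_combination -3*hαβ
      rw [h33]
      exact dvd_add (Dvd.dvd.mul_left hd3n α) (Dvd.dvd.mul_left hd3v β)
    have hhpos : 0 < h := by
      have hpos' : 0 < m₀^2*h := by rw [← hA']; positivity
      rcases mul_pos_iff.mp hpos' with ⟨_, h'⟩ | ⟨h', _⟩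
      · exact h'
      · exact absurd h' (not_lt.mpr (sq_nonneg m₀))
    have hle3 : h ≤ 3 := Int.le_of_dvd (by norm_num) h3
    interval_cases h
    · -- h = 1 : parity contradiction
      rw [mul_one] at hA' hB'
      refine no_h1 n₀ v₀ m₀ u₀ ?_ hA' hB'
      rintro ⟨e1, e2⟩
      have h2n : (2:ℤ) ∣ n₀ := by omega
      have h2v : (2:ℤ) ∣ v₀ := by omega
      have := (hcopvn.symm).isUnit_of_dvd' h2n h2v
      rw [Int.isUnit_iff] at this
      omega
    · -- h = 2 : impossible since h ∣ 3
      norm_num at h3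
    · -- h = 3 : descent
      have nh1 : 2*m₀^2 = v₀^2 + u₀^2 := by linarith only [hA', hB']
      have nh2 : 2*u₀^2 = m₀^2 + n₀^2 := by linarith only [hA', hB']
      -- size bounds
      have hb1 : 1 ≤ b^2 := one_le_sq hbne
      have hn₀n : n₀^2 ≤ n^2 := by
        have hnn : n^2 - n₀^2 = (b^2-1)*n₀^2 := by rw [hn₀]; ring
        have h0 : 0 ≤ (b^2-1)*n₀^2 := mul_nonneg (by linarith only [hb1]) (sq_nonneg n₀)
        linarith only [hnn, h0]
      have hv₀V : v₀^2 ≤ V^2 := by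
        have hvv : V^2 - v₀^2 = (b^2-1)*v₀^2 := by rw [hv₀]; ring
        have h0 : 0 ≤ (b^2-1)*v₀^2 := mul_nonneg (by linarith only [hb1]) (sq_nonneg v₀)
        linarith only [hvv, h0]
      have hm1 : 1 ≤ m^2 := one_le_sq hmz
      have hU1 : 1 ≤ U^2 := one_le_sq hUz
      have hnQ : n^2 ≤ Q - 1 := by linarith only [hQmn, hm1]
      have hVR : V^2 ≤ R - 1 := by linarith only [hRU, hU1]
      have hQQ : Q ≤ Q^2 := by
        have := mul_le_mul_of_nonneg_left (by linarith only [hQpos] : (1:ℤ) ≤ Q) (le_of_lt hQpos)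
        calc Q = Q*1 := by ring
          _ ≤ Q*Q := this
          _ = Q^2 := by ring
      have hRR : R ≤ R^2 := by
        have := mul_le_mul_of_nonneg_left (by linarith only [hRpos] : (1:ℤ) ≤ R) (le_of_lt hRpos)
        calc R = R*1 := by ring
          _ ≤ R*R := this
          _ = R^2 := by ring
      have hsum : m₀^2 + u₀^2 = n₀^2 + v₀^2 := by linarith only [nh1, nh2]
      have hmeas : m₀^2 + u₀^2 < Q^2 + R^2 := by linarith only [hsum, hn₀n, hv₀V, hnQ, hVR, hQQ, hRR]
      have hQRpos : (0:ℤ) < Q^2 + R^2 := by positivity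
      have hmeasN : (m₀^2 + u₀^2).toNat < μ := by
        have h' : (m₀^2 + u₀^2).toNat < (Q^2 + R^2).toNat := by
          rw [Int.toNat_lt_toNat hQRpos]; exact hmeas
        omega
      rcases lt_trichotomy (m₀^2) (u₀^2) with hcmp | hcmp | hcmp
      · exact IH ((m₀^2+u₀^2).toNat) hmeasN v₀ m₀ u₀ n₀ le_rfl nh1 nh2 hcmp
      · -- degenerate : contradiction
        have hnv : n₀^2 = v₀^2 := by linarith only [hA', hB', hcmp]
        have hdvd : n₀ ∣ v₀ := by
          have : (n₀ - v₀)*(n₀ + v₀) = 0 := by linear_combination hnv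
          rcases mul_eq_zero.mp this with h' | h'
          · exact ⟨1, by linarith⟩
          · exact ⟨-1, by linarith⟩
        have hunit := (hcopvn.symm).isUnit_of_dvd' dvd_rfl hdvd
        rw [Int.isUnit_iff] at hunit
        have hn₀1 : n₀^2 = 1 := by rcases hunit with h' | h' <;> rw [h'] <;> norm_num
        have hv₀1 : v₀^2 = 1 := by linarith only [hnv, hn₀1]
        have hm₀1 : m₀^2 = 1 := by linarith only [hA', hn₀1, hv₀1]
        have hu₀1 : u₀^2 = 1 := by linarith only [hB', hn₀1, hv₀1]
        have hU2 : U^2 = a^2 := by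
          have h' : U^2 = a^2*u₀^2 := by rw [hu₀]; ring
          rw [h', hu₀1, mul_one]
        have hm2 : m^2 = a^2 := by
          have h' : m^2 = a^2*m₀^2 := by rw [hm₀]; ring
          rw [h', hm₀1, mul_one]
        have hV2 : V^2 = b^2 := by
          have h' : V^2 = b^2*v₀^2 := by rw [hv₀]; ring
          rw [h', hv₀1, mul_one]
        have hn2 : n^2 = b^2 := by
          have h' : n^2 = b^2*n₀^2 := by rw [hn₀]; ring
          rw [h', hn₀1, mul_one]
        have hmnb : m*n = b^2 := by linarith only [hB, hU2, hV2, hm2, hn2]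
        have habs : (b^2)^2 = a^2*b^2 := by
          have h' : (m*n)^2 = m^2*n^2 := by ring
          rw [hmnb, hm2, hn2] at h'
          linarith
        have hba : b^2 = a^2 := by
          have h' : b^2*(b^2 - a^2) = 0 := by linear_combination habs
          rcases mul_eq_zero.mp h' with h'' | h''
          · exact absurd h'' (by positivity)
          · linarith
        exact sq_ne_of_opp_parity m n hmnpar (by linarith)
      · -- reversed direction
        have nh1' : 2*u₀^2 = n₀^2 + m₀^2 := by linarith only [nh2]
        have nh2' : 2*m₀^2 = u₀^2 + v₀^2 := by linarith only [nh1]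
        have hmeasN' : (u₀^2 + m₀^2).toNat < μ := by
          have : u₀^2 + m₀^2 = m₀^2 + u₀^2 := by ring
          rw [this]; exact hmeasN
        exact IH ((u₀^2+m₀^2).toNat) hmeasN' n₀ u₀ m₀ v₀ le_rfl nh1' nh2' hcmp

theorem stmt17 :
    ¬ ∃ a1 a2 a3 a4 : ℚ, a1 < a2 ∧ a2 < a3 ∧ a3 < a4 ∧
      a2 - a1 = a3 - a2 ∧ a3 - a2 = a4 - a3 ∧
      (∃ r : ℚ, a1 = r ^ 2) ∧ (∃ r : ℚ, a2 = r ^ 2) ∧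
      (∃ r : ℚ, a3 = r ^ 2) ∧ (∃ r : ℚ, a4 = r ^ 2) := by
  rintro ⟨a1, a2, a3, a4, h12, h23, h34, hd1, hd2, ⟨r1, hr1⟩, ⟨r2, hr2⟩, ⟨r3, hr3⟩, ⟨r4, hr4⟩⟩
  set D : ℚ := ((r1.den : ℚ)) * (r2.den : ℚ) * (r3.den : ℚ) * (r4.den : ℚ) with hD
  have hDne : D ≠ 0 := by
    have h1 := (Nat.cast_ne_zero (R := ℚ)).mpr r1.den_nz
    have h2 := (Nat.cast_ne_zero (R := ℚ)).mpr r2.den_nz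
    have h3 := (Nat.cast_ne_zero (R := ℚ)).mpr r3.den_nz
    have h4 := (Nat.cast_ne_zero (R := ℚ)).mpr r4.den_nz
    exact mul_ne_zero (mul_ne_zero (mul_ne_zero h1 h2) h3) h4
  set x1 : ℤ := r1.num * ((r2.den : ℤ) * (r3.den : ℤ) * (r4.den : ℤ)) with hx1
  set x2 : ℤ := r2.num * ((r1.den : ℤ) * (r3.den : ℤ) * (r4.den : ℤ)) with hx2
  set x3 : ℤ := r3.num * ((r1.den : ℤ) * (r2.den : ℤ) * (r4.den : ℤ)) with hx3
  set x4 : ℤ := r4.num * ((r1.den : ℤ) * (r2.den : ℤ) * (r3.den : ℤ)) with hx4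
  have hn1 : (r1.num : ℚ) = r1 * (r1.den : ℚ) := by exact_mod_cast (Rat.mul_den_eq_num r1).symm
  have hn2 : (r2.num : ℚ) = r2 * (r2.den : ℚ) := by exact_mod_cast (Rat.mul_den_eq_num r2).symm
  have hn3 : (r3.num : ℚ) = r3 * (r3.den : ℚ) := by exact_mod_cast (Rat.mul_den_eq_num r3).symm
  have hn4 : (r4.num : ℚ) = r4 * (r4.den : ℚ) := by exact_mod_cast (Rat.mul_den_eq_num r4).symm
  have e1 : ((x1 : ℤ) : ℚ) = r1 * D := by rw [hx1]; push_cast; rw [hn1, hD]; ring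
  have e2 : ((x2 : ℤ) : ℚ) = r2 * D := by rw [hx2]; push_cast; rw [hn2, hD]; ring
  have e3 : ((x3 : ℤ) : ℚ) = r3 * D := by rw [hx3]; push_cast; rw [hn3, hD]; ring
  have e4 : ((x4 : ℤ) : ℚ) = r4 * D := by rw [hx4]; push_cast; rw [hn4, hD]; ring
  have hq1 : 2*r2^2 = r1^2 + r3^2 := by rw [← hr1, ← hr2, ← hr3]; linarith
  have hq2 : 2*r3^2 = r2^2 + r4^2 := by rw [← hr2, ← hr3, ← hr4]; linarith
  have hq3 : r2^2 < r3^2 := by rw [← hr2, ← hr3]; exact h23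
  have hD2 : (0:ℚ) < D^2 := by positivity
  have H1 : 2*x2^2 = x1^2 + x3^2 := by
    have : ((2*x2^2 : ℤ) : ℚ) = ((x1^2 + x3^2 : ℤ) : ℚ) := by
      push_cast
      rw [e1, e2, e3]
      linear_combination D^2 * hq1
    exact_mod_cast this
  have H2 : 2*x3^2 = x2^2 + x4^2 := by
    have : ((2*x3^2 : ℤ) : ℚ) = ((x2^2 + x4^2 : ℤ) : ℚ) := by
      push_cast
      rw [e2, e3, e4]
      linear_combination D^2 * hq2
    exact_mod_cast this
  have H3 : x2^2 < x3^2 := by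
    have : ((x2^2 : ℤ) : ℚ) < ((x3^2 : ℤ) : ℚ) := by
      push_cast
      rw [e2, e3]
      calc (r2*D)^2 = r2^2*D^2 := by ring
        _ < r3^2*D^2 := by exact mul_lt_mul_of_pos_right hq3 hD2
        _ = (r3*D)^2 := by ring
    exact_mod_cast this
  exact no4AP ((x2^2+x3^2).toNat) x1 x2 x3 x4 le_rfl H1 H2 H3
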